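/- For all integers r₁ ≥ 1 and n₂ ≥ 1 there exists N such that the following holds for every n₁ ≥ N, every integer r₂ with 0 ≤ r₂ ≤ n₂ − 1, every r₁-regular simple graph G₁ on n₁ vertices, and every r₂-regular simple graph G₂ on n₂ vertices. Let G = G₁ ∨ G₂ be the join (the graph on the disjoint union of the vertex sets containing all edges of G₁ and G₂ and all edges between a vertex of G₁ and a vertex of G₂), let n = n₁ + n₂, let δ and d̄ be the minimum and average degree of G, let λ_max and λ_min be the maximum and minimum eigenvalues of the adjacency matrix of G, and let μ be the maximum eigenvalue of the Laplacian matrix of G. Then β₁ < β₂ < β₃, where β₁ = −λ_min·n·(d̄ − λ_min)/(δ − λ_min)², β₂ = n·(−λ_max·λ_min)/(δ² − λ_max·λ_min), and β₃ = n·(μ − δ)/μ. -/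

import Mathlib

/-- The join `G₁ ∨ G₂` of two simple graphs: the graph on the disjoint union of the
vertex sets containing all edges of `G₁`, all edges of `G₂`, and all edges between a
vertex of `G₁` and a vertex of `G₂`. -/
def SimpleGraph.join {α β : Type*} (G₁ : SimpleGraph α) (G₂ : SimpleGraph β) :
    SimpleGraph (α ⊕ β) where
  Adj u w := match u, w with
    | Sum.inl a, Sum.inl b => G₁.Adj a b
    | Sum.inr a, Sum.inr b => G₂.Adj a b
    | Sum.inl _, Sum.inr _ => True
    | Sum.inr _, Sum.inl _ => True
  symm := ⟨by
    rintro (a | a) (b | b) h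
    · exact G₁.adj_symm h
    · exact trivial
    · exact trivial
    · exact G₂.adj_symm h⟩
  loopless := ⟨by
    rintro (a | a) h
    · exact G₁.ne_of_adj h rfl
    · exact G₂.ne_of_adj h rfl⟩

instance {α β : Type*} (G₁ : SimpleGraph α) (G₂ : SimpleGraph β)
    [DecidableRel G₁.Adj] [DecidableRel G₂.Adj] :
    DecidableRel (G₁.join G₂).Adj := fun u w =>
  match u, w with
  | Sum.inl a, Sum.inl b => inferInstanceAs (Decidable (G₁.Adj a b))
  | Sum.inr a, Sum.inr b => inferInstanceAs (Decidable (G₂.Adj a b))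
  | Sum.inl _, Sum.inr _ => inferInstanceAs (Decidable True)
  | Sum.inr _, Sum.inl _ => inferInstanceAs (Decidable True)


lemma mem_spectrum_iff_exists_eig {V : Type*} [Fintype V] [DecidableEq V]
    {M : Matrix V V ℝ} {μ : ℝ} :
    μ ∈ spectrum ℝ M ↔ ∃ v : V → ℝ, v ≠ 0 ∧ M.mulVec v = μ • v := by
  rw [← AlgEquiv.spectrum_eq (Matrix.toLinAlgEquiv' : Matrix V V ℝ ≃ₐ[ℝ] _) M,
    ← Module.End.hasEigenvalue_iff_mem_spectrum, Module.End.hasEigenvalue_iff,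
    Submodule.ne_bot_iff]
  constructor
  · rintro ⟨v, hv, hv0⟩
    exact ⟨v, hv0, by simpa [Matrix.toLinAlgEquiv'_apply] using
      Module.End.mem_eigenspace_iff.mp hv⟩
  · rintro ⟨v, hv0, hv⟩
    exact ⟨v, Module.End.mem_eigenspace_iff.mpr (by simpa [Matrix.toLinAlgEquiv'_apply] using hv), hv0⟩
open Matrix Finset

set_option linter.unusedSectionVars false

variable {n₁ n₂ : ℕ} (G₁ : SimpleGraph (Fin n₁)) [DecidableRel G₁.Adj]
  (G₂ : SimpleGraph (Fin n₂)) [DecidableRel G₂.Adj]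

@[simp] lemma join_adj_ll (a b : Fin n₁) :
    (G₁.join G₂).Adj (Sum.inl a) (Sum.inl b) ↔ G₁.Adj a b := Iff.rfl
@[simp] lemma join_adj_rr (a b : Fin n₂) :
    (G₁.join G₂).Adj (Sum.inr a) (Sum.inr b) ↔ G₂.Adj a b := Iff.rfl
@[simp] lemma join_adj_lr (a : Fin n₁) (b : Fin n₂) :
    (G₁.join G₂).Adj (Sum.inl a) (Sum.inr b) := trivial
@[simp] lemma join_adj_rl (a : Fin n₂) (b : Fin n₁) :
    (G₁.join G₂).Adj (Sum.inr a) (Sum.inl b) := trivial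

lemma join_neighborFinset_inl (a : Fin n₁) :
    (G₁.join G₂).neighborFinset (Sum.inl a) = (G₁.neighborFinset a).disjSum Finset.univ := by
  ext w
  rcases w with b | b <;> simp

lemma join_neighborFinset_inr (b : Fin n₂) :
    (G₁.join G₂).neighborFinset (Sum.inr b) = Finset.univ.disjSum (G₂.neighborFinset b) := by
  ext w
  rcases w with a | a <;> simp

lemma join_degree_inl (a : Fin n₁) :
    (G₁.join G₂).degree (Sum.inl a) = G₁.degree a + n₂ := by
  rw [SimpleGraph.degree, join_neighborFinset_inl, Finset.card_disjSum,
    Finset.card_univ, Fintype.card_fin]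
  rfl

lemma join_degree_inr (b : Fin n₂) :
    (G₁.join G₂).degree (Sum.inr b) = n₁ + G₂.degree b := by
  rw [SimpleGraph.degree, join_neighborFinset_inr, Finset.card_disjSum,
    Finset.card_univ, Fintype.card_fin]
  rfl

lemma regular_quad_bound {V : Type*} [Fintype V] [DecidableEq V] (G : SimpleGraph V)
    [DecidableRel G.Adj] {r : ℕ} (hreg : G.IsRegularOfDegree r) (x : V → ℝ) :
    |∑ v, x v * ∑ w ∈ G.neighborFinset v, x w| ≤ r * ∑ v, x v ^ 2 := by
  classical
  have hrow : ∀ (f : V → ℝ) (v : V), (∑ w, if G.Adj v w then f v else 0) = (r : ℝ) * f v := by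
    intro f v
    rw [← Finset.sum_filter, Finset.sum_const, ← SimpleGraph.neighborFinset_eq_filter]
    rw [show (G.neighborFinset v).card = r from hreg v, nsmul_eq_mul]
  have expand : (∑ v, x v * ∑ w ∈ G.neighborFinset v, x w)
      = ∑ v, ∑ w, (if G.Adj v w then x v * x w else 0) := by
    refine Finset.sum_congr rfl fun v _ => ?_
    rw [SimpleGraph.neighborFinset_eq_filter, Finset.mul_sum, Finset.sum_filter]
  rw [expand]
  calc |∑ v, ∑ w, (if G.Adj v w then x v * x w else 0)|
      ≤ ∑ v, |∑ w, (if G.Adj v w then x v * x w else 0)| := Finset.abs_sum_le_sum_abs _ _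
    _ ≤ ∑ v, ∑ w, |if G.Adj v w then x v * x w else 0| := by
        exact Finset.sum_le_sum fun v _ => Finset.abs_sum_le_sum_abs _ _
    _ ≤ ∑ v, ∑ w, ((if G.Adj v w then x v ^ 2 / 2 else 0) + (if G.Adj v w then x w ^ 2 / 2 else 0)) := by
        refine Finset.sum_le_sum fun v _ => Finset.sum_le_sum fun w _ => ?_
        split_ifs with h
        · rw [abs_mul]
          nlinarith [sq_nonneg (|x v| - |x w|), sq_abs (x v), sq_abs (x w), abs_nonneg (x v), abs_nonneg (x w)]
        · simp
    _ = (∑ v, ∑ w, (if G.Adj v w then x v ^ 2 / 2 else 0))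
        + (∑ v, ∑ w, (if G.Adj v w then x w ^ 2 / 2 else 0)) := by
        rw [← Finset.sum_add_distrib]
        exact Finset.sum_congr rfl fun v _ => by rw [← Finset.sum_add_distrib]
    _ = (r : ℝ) * ∑ v, x v ^ 2 := by
        have h1 : (∑ v, ∑ w, (if G.Adj v w then x v ^ 2 / 2 else 0)) = ∑ v, (r : ℝ) * (x v ^ 2 / 2) :=
          Finset.sum_congr rfl fun v _ => hrow (fun v => x v ^ 2 / 2) v
        have h2 : (∑ v, ∑ w, (if G.Adj v w then x w ^ 2 / 2 else 0)) = ∑ w, (r : ℝ) * (x w ^ 2 / 2) := by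
          rw [Finset.sum_comm]
          refine Finset.sum_congr rfl fun w _ => ?_
          rw [← hrow (fun w => x w ^ 2 / 2) w]
          exact Finset.sum_congr rfl fun v _ => if_congr (G.adj_comm v w) rfl rfl
        rw [h1, h2, ← Finset.sum_add_distrib, Finset.mul_sum]
        exact Finset.sum_congr rfl fun v _ => by ring
set_option maxHeartbeats 2000000 in
lemma join_spec_abs_bound {r₁ r₂ : ℕ} (hn₂ : 1 ≤ n₂)
    (h₁ : G₁.IsRegularOfDegree r₁) (h₂ : G₂.IsRegularOfDegree r₂) (hr₂ : r₂ ≤ n₂)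
    {lam : ℝ} (h : lam ∈ spectrum ℝ ((G₁.join G₂).adjMatrix ℝ)) :
    |lam| ≤ Real.sqrt ((n₁ : ℝ) * n₂) + r₁ + n₂ := by
  classical
  obtain ⟨v, hv0, hv⟩ := mem_spectrum_iff_exists_eig.mp h
  set x : Fin n₁ → ℝ := fun a => v (Sum.inl a) with hx
  set y : Fin n₂ → ℝ := fun b => v (Sum.inr b) with hy
  set P : ℝ := ∑ a, x a ^ 2 with hP
  set Q : ℝ := ∑ b, y b ^ 2 with hQ
  set s : ℝ := ∑ a, x a with hs
  set t : ℝ := ∑ b, y b with ht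
  set s₀ : ℝ := Real.sqrt ((n₁ : ℝ) * n₂) with hs₀
  have hs₀0 : 0 ≤ s₀ := Real.sqrt_nonneg _
  have hs₀sq : s₀ ^ 2 = (n₁ : ℝ) * n₂ := Real.sq_sqrt (by positivity)
  have hP0 : 0 ≤ P := Finset.sum_nonneg fun a _ => sq_nonneg _
  have hQ0 : 0 ≤ Q := Finset.sum_nonneg fun b _ => sq_nonneg _
  -- eigen equations
  have hvl : ∀ a : Fin n₁, lam * x a = (∑ w ∈ G₁.neighborFinset a, x w) + t := by
    intro a
    have := congrFun hv (Sum.inl a)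
    rw [SimpleGraph.adjMatrix_mulVec_apply, join_neighborFinset_inl, Finset.sum_disjSum,
      Pi.smul_apply, smul_eq_mul] at this
    rw [← this]
  have hvr : ∀ b : Fin n₂, lam * y b = (∑ w ∈ G₂.neighborFinset b, y w) + s := by
    intro b
    have := congrFun hv (Sum.inr b)
    rw [SimpleGraph.adjMatrix_mulVec_apply, join_neighborFinset_inr, Finset.sum_disjSum,
      Pi.smul_apply, smul_eq_mul] at this
    rw [← this]
    ring
  -- quadratic form identity
  have hquad : lam * (P + Q) = (∑ a, x a * ∑ w ∈ G₁.neighborFinset a, x w)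
      + (∑ b, y b * ∑ w ∈ G₂.neighborFinset b, y w) + 2 * (s * t) := by
    have h1 : lam * P = (∑ a, x a * ∑ w ∈ G₁.neighborFinset a, x w) + s * t := by
      rw [hP, Finset.mul_sum]
      have : ∀ a : Fin n₁, lam * x a ^ 2 = x a * (∑ w ∈ G₁.neighborFinset a, x w) + x a * t := by
        intro a
        linear_combination x a * hvl a
      rw [Finset.sum_congr rfl fun a _ => this a, Finset.sum_add_distrib, ← Finset.sum_mul]
    have h2 : lam * Q = (∑ b, y b * ∑ w ∈ G₂.neighborFinset b, y w) + t * s := by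
      rw [hQ, Finset.mul_sum]
      have : ∀ b : Fin n₂, lam * y b ^ 2 = y b * (∑ w ∈ G₂.neighborFinset b, y w) + y b * s := by
        intro b
        linear_combination y b * hvr b
      rw [Finset.sum_congr rfl fun b _ => this b, Finset.sum_add_distrib, ← Finset.sum_mul]
    linear_combination h1 + h2
  -- bounds
  have hT1 : |∑ a, x a * ∑ w ∈ G₁.neighborFinset a, x w| ≤ (r₁ : ℝ) * P := by
    rw [hP]; exact regular_quad_bound G₁ h₁ x
  have hT2 : |∑ b, y b * ∑ w ∈ G₂.neighborFinset b, y w| ≤ (r₂ : ℝ) * Q := by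
    rw [hQ]; exact regular_quad_bound G₂ h₂ y
  have hcs1 : s ^ 2 ≤ (n₁ : ℝ) * P := by
    have := sq_sum_le_card_mul_sum_sq (s := (Finset.univ : Finset (Fin n₁))) (f := x)
    simpa [Finset.card_univ] using this
  have hcs2 : t ^ 2 ≤ (n₂ : ℝ) * Q := by
    have := sq_sum_le_card_mul_sum_sq (s := (Finset.univ : Finset (Fin n₂))) (f := y)
    simpa [Finset.card_univ] using this
  have hn₂R : (1 : ℝ) ≤ (n₂ : ℝ) := by exact_mod_cast hn₂
  have hcross : |2 * (s * t)| ≤ s₀ * (P + Q) := by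
    have h1 : (2 * (s * t)) ^ 2 ≤ 4 * (((n₁ : ℝ) * P) * ((n₂ : ℝ) * Q)) := by
      have := mul_le_mul hcs1 hcs2 (sq_nonneg t) (by positivity)
      nlinarith [this]
    have h2 : 4 * (((n₁ : ℝ) * P) * ((n₂ : ℝ) * Q)) ≤ (s₀ * (P + Q)) ^ 2 := by
      have h3 : 4 * (P * Q) ≤ (P + Q) ^ 2 := by nlinarith [sq_nonneg (P - Q)]
      calc 4 * (((n₁ : ℝ) * P) * ((n₂ : ℝ) * Q)) = s₀ ^ 2 * (4 * (P * Q)) := by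
            rw [hs₀sq]; ring
        _ ≤ s₀ ^ 2 * (P + Q) ^ 2 := by
            exact mul_le_mul_of_nonneg_left h3 (sq_nonneg s₀)
        _ = (s₀ * (P + Q)) ^ 2 := by ring
    exact abs_le_of_sq_le_sq (h1.trans h2) (by positivity)
  have hr₂R : (r₂ : ℝ) ≤ (n₂ : ℝ) := by exact_mod_cast hr₂
  clear_value x y P Q s t s₀
  have hPQpos : 0 < P + Q := by
    have hsum : P + Q = ∑ i, v i ^ 2 := by
      rw [hP, hQ, Fintype.sum_sum_type]
      simp [hx, hy]
    obtain ⟨i, hi⟩ : ∃ i, v i ≠ 0 := by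
      by_contra hcon
      push_neg at hcon
      exact hv0 (funext hcon)
    rw [hsum]
    exact Finset.sum_pos' (fun j _ => sq_nonneg _) ⟨i, Finset.mem_univ i, by positivity⟩
  have hbound : |lam| * (P + Q) ≤ (s₀ + r₁ + n₂) * (P + Q) := by
    have h1 : |lam * (P + Q)| ≤ (s₀ + r₁ + n₂) * (P + Q) := by
      rw [hquad]
      calc |(∑ a, x a * ∑ w ∈ G₁.neighborFinset a, x w)
          + (∑ b, y b * ∑ w ∈ G₂.neighborFinset b, y w) + 2 * (s * t)|
          ≤ |∑ a, x a * ∑ w ∈ G₁.neighborFinset a, x w|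
            + |∑ b, y b * ∑ w ∈ G₂.neighborFinset b, y w| + |2 * (s * t)| := by
            exact (abs_add_le _ _).trans (add_le_add_left (abs_add_le _ _) _)
        _ ≤ (r₁ : ℝ) * P + (r₂ : ℝ) * Q + s₀ * (P + Q) :=
            add_le_add (add_le_add hT1 hT2) hcross
        _ ≤ (s₀ + r₁ + n₂) * (P + Q) := by
            nlinarith [hP0, hQ0, hr₂R, Nat.cast_nonneg (α := ℝ) r₁,
              Nat.cast_nonneg (α := ℝ) n₂, hs₀0]
    rw [abs_mul, abs_of_pos hPQpos] at h1
    exact h1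
  exact le_of_mul_le_mul_right hbound hPQpos

lemma join_root_mem_spectrum {r₁ r₂ : ℕ} (hn₁ : 1 ≤ n₁) (hn₂ : 1 ≤ n₂)
    (h₁ : G₁.IsRegularOfDegree r₁) (h₂ : G₂.IsRegularOfDegree r₂)
    {x : ℝ} (hx : (x - r₁) * (x - r₂) = (n₁ : ℝ) * n₂) :
    x ∈ spectrum ℝ ((G₁.join G₂).adjMatrix ℝ) := by
  apply mem_spectrum_iff_exists_eig.mpr
  refine ⟨Sum.elim (fun _ => (n₂ : ℝ)) (fun _ => x - r₁), ?_, ?_⟩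
  · intro h0
    have := congrFun h0 (Sum.inl ⟨0, hn₁⟩)
    simp only [Sum.elim_inl, Pi.zero_apply] at this
    have : (0 : ℝ) < n₂ := by exact_mod_cast hn₂
    simp_all
  · funext i
    rcases i with a | b
    · rw [SimpleGraph.adjMatrix_mulVec_apply, join_neighborFinset_inl, Finset.sum_disjSum]
      simp only [Sum.elim_inl, Sum.elim_inr, Finset.sum_const, Finset.card_univ,
        Fintype.card_fin, nsmul_eq_mul, Pi.smul_apply, smul_eq_mul]
      rw [show (G₁.neighborFinset a).card = r₁ from h₁ a]
      ring
    · rw [SimpleGraph.adjMatrix_mulVec_apply, join_neighborFinset_inr, Finset.sum_disjSum]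
      simp only [Sum.elim_inl, Sum.elim_inr, Finset.sum_const, Finset.card_univ,
        Fintype.card_fin, nsmul_eq_mul, Pi.smul_apply, smul_eq_mul]
      rw [show (G₂.neighborFinset b).card = r₂ from h₂ b]
      linear_combination -hx

lemma join_lap_mem_spectrum {r₁ r₂ : ℕ} (hn₁ : 1 ≤ n₁) (hn₂ : 1 ≤ n₂)
    (h₁ : G₁.IsRegularOfDegree r₁) (h₂ : G₂.IsRegularOfDegree r₂) :
    ((n₁ : ℝ) + n₂) ∈ spectrum ℝ ((G₁.join G₂).lapMatrix ℝ) := by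
  apply mem_spectrum_iff_exists_eig.mpr
  refine ⟨Sum.elim (fun _ => (n₂ : ℝ)) (fun _ => -(n₁ : ℝ)), ?_, ?_⟩
  · intro h0
    have := congrFun h0 (Sum.inl ⟨0, hn₁⟩)
    simp only [Sum.elim_inl, Pi.zero_apply] at this
    have : (0 : ℝ) < n₂ := by exact_mod_cast hn₂
    simp_all
  · funext i
    rcases i with a | b
    · rw [SimpleGraph.lapMatrix_mulVec_apply, join_neighborFinset_inl, Finset.sum_disjSum,
        join_degree_inl]
      simp only [Sum.elim_inl, Sum.elim_inr, Finset.sum_const, Finset.card_univ,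
        Fintype.card_fin, nsmul_eq_mul, Pi.smul_apply, smul_eq_mul]
      rw [show G₁.degree a = r₁ from h₁ a, show (G₁.neighborFinset a).card = r₁ from h₁ a]
      push_cast
      ring
    · rw [SimpleGraph.lapMatrix_mulVec_apply, join_neighborFinset_inr, Finset.sum_disjSum,
        join_degree_inr]
      simp only [Sum.elim_inl, Sum.elim_inr, Finset.sum_const, Finset.card_univ,
        Fintype.card_fin, nsmul_eq_mul, Pi.smul_apply, smul_eq_mul]
      rw [show G₂.degree b = r₂ from h₂ b, show (G₂.neighborFinset b).card = r₂ from h₂ b]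
      push_cast
      ring

set_option maxHeartbeats 1000000 in
lemma final_numeric (R1 R2 N1 N2 n D d a b m s₀ : ℝ)
    (hR1 : 1 ≤ R1) (hN2 : 1 ≤ N2) (hR2 : 0 ≤ R2) (hR2' : R2 + 1 ≤ N2)
    (hN1 : 16 * D ^ 4 ≤ N1)
    (hD : D = R1 + N2) (hn : n = N1 + N2)
    (hs₀0 : 0 ≤ s₀) (hs₀sq : s₀ ^ 2 = N1 * N2)
    (ha : s₀ ≤ a) (haK : a ≤ s₀ + D)
    (hb : b ≤ D - s₀) (hbK : -(s₀ + D) ≤ b)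
    (hm : n ≤ m)
    (hdn : d * n = N1 * D + N2 * (N1 + R2)) :
    (-b * n * (d - b) / (D - b) ^ 2 < n * (-(a * b)) / (D ^ 2 - a * b)) ∧
    (n * (-(a * b)) / (D ^ 2 - a * b) < n * (m - D) / m) := by
  have hD2 : 2 ≤ D := by linarith
  have hDpos : 0 < D := by linarith
  have hDD2 : 4 ≤ D ^ 2 := by nlinarith [hD2]
  have hD4 : 16 ≤ D ^ 4 := by nlinarith [hDD2]
  have hN1pos : 0 < N1 := by nlinarith [hN1, hD4]
  have hN1nn : 0 ≤ N1 := le_of_lt hN1pos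
  have hnpos : 0 < n := by rw [hn]; linarith
  have hN2D : N2 + 1 ≤ D := by linarith
  have hDD : D ≤ D ^ 2 := by nlinarith [hD2]
  -- s₀ is large
  have hs₀big : 4 * D ^ 2 ≤ s₀ := by
    have h1 : (4 * D ^ 2) ^ 2 ≤ s₀ ^ 2 := by
      rw [hs₀sq]
      nlinarith [hN1, hN2, hN1pos]
    have := abs_le_of_sq_le_sq h1 hs₀0
    rwa [abs_of_nonneg (by positivity)] at this
  have hs₀D : D ≤ s₀ - D := by nlinarith [hs₀big, hD2]
  have hapos : 0 < a := by nlinarith [ha, hs₀big, hD2]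
  have hbneg : b < 0 := by nlinarith [hb, hs₀big, hD2]
  have hmb : 0 < -b := by linarith
  have habpos : 0 < a * (-b) := mul_pos hapos hmb
  have hbK' : -b ≤ s₀ + D := by linarith
  -- `4 D s₀ ≤ N1`
  have h4Ds : 4 * D * s₀ ≤ N1 := by
    have e1 : (4 * D * s₀) ^ 2 = 16 * D ^ 2 * (N1 * N2) := by rw [← hs₀sq]; ring
    have e2 : N1 * N2 ≤ N1 * D ^ 2 :=
      mul_le_mul_of_nonneg_left (by linarith [hN2D, hDD]) hN1nn
    have e2' : 16 * D ^ 2 * (N1 * N2) ≤ 16 * D ^ 2 * (N1 * D ^ 2) :=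
      mul_le_mul_of_nonneg_left e2 (by positivity)
    have e4 : 16 * D ^ 4 * N1 ≤ N1 * N1 := mul_le_mul_of_nonneg_right hN1 hN1nn
    have hsq : (4 * D * s₀) ^ 2 ≤ N1 ^ 2 := by nlinarith [e1, e2', e4]
    have := abs_le_of_sq_le_sq hsq hN1nn
    rwa [abs_of_nonneg (by positivity)] at this
  -- key2 : a * (-b) < D * (n - D)
  have key2 : a * (-b) < D * (n - D) := by
    have hub : a * (-b) ≤ (s₀ + D) * (s₀ + D) :=
      mul_le_mul haK hbK' (le_of_lt hmb) (by positivity)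
    have hs₀sq' : N1 * N2 ≤ N1 * (D - 1) :=
      mul_le_mul_of_nonneg_left (by linarith) hN1nn
    have hD2N1 : 16 * D ^ 2 ≤ N1 := by nlinarith [hN1, hD2]
    have hDN2nn : 0 ≤ D * N2 := by positivity
    nlinarith [hub, hs₀sq, hs₀sq', h4Ds, hD2N1, hDN2nn, hn, hD]
  -- bound on 2D - d
  have hN2N1 : N2 ≤ N1 := by nlinarith [hN2D, hD4, hN1, hD2]
  have hdist : (2 * D - d) * n = N1 * R1 + N2 * (2 * D - R2) := by
    linear_combination (2 * D) * hn - hdn + N1 * hD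
  have hge : N1 ≤ (2 * D - d) * n := by
    have p1 : N1 ≤ N1 * R1 := by nlinarith [hR1, hN1pos]
    have p2 : 0 ≤ N2 * (2 * D - R2) := mul_nonneg (by linarith) (by linarith)
    linarith [hdist, p1, p2]
  have h2Dd : 1 / 2 ≤ 2 * D - d := by nlinarith [hge, hnpos, hN2N1, hn]
  have hd2D : d ≤ 2 * D := by linarith
  -- key1
  have hd_lhs : d - a - b ≤ 3 * D := by linarith [ha, hbK']
  have k3 : D ^ 2 * (d - a - b) ≤ D ^ 2 * (3 * D) :=
    mul_le_mul_of_nonneg_left hd_lhs (sq_nonneg D)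
  have q1 : 3 * D ^ 2 ≤ s₀ - D := by nlinarith [hs₀big, hD2]
  have q2 : (4 * D ^ 2) * (3 * D ^ 2) ≤ s₀ * (s₀ - D) :=
    mul_le_mul hs₀big q1 (by positivity) hs₀0
  have q3 : s₀ * (s₀ - D) ≤ a * (-b) :=
    mul_le_mul ha (by linarith) (by linarith [hs₀D, hDpos]) (le_of_lt hapos)
  have k1 : a * (-b) * (1 / 2) ≤ a * (-b) * (2 * D - d) :=
    mul_le_mul_of_nonneg_left h2Dd (le_of_lt habpos)
  have k4 : 3 * D ^ 3 < 6 * D ^ 4 := by nlinarith [hD2, hDpos]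
  have key1 : D ^ 2 * (d - a - b) < a * (-b) * (2 * D - d) := by nlinarith [k1, k3, k4, q2, q3]
  -- denominators
  have hden1 : 0 < (D - b) ^ 2 := pow_pos (by linarith) 2
  have hden2 : 0 < D ^ 2 - a * b := by nlinarith [habpos, sq_nonneg D]
  have hm0 : 0 < m := lt_of_lt_of_le hnpos hm
  constructor
  · rw [div_lt_div_iff₀ hden1 hden2]
    have identity : n * (-(a * b)) * (D - b) ^ 2 - -b * n * (d - b) * (D ^ 2 - a * b)
        = (n * -b) * (a * (-b) * (2 * D - d) - D ^ 2 * (d - a - b)) := by ring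
    have hpos : 0 < (n * -b) * (a * (-b) * (2 * D - d) - D ^ 2 * (d - a - b)) :=
      mul_pos (mul_pos hnpos hmb) (by linarith [key1])
    linarith [identity, hpos]
  · have step1 : n * (-(a * b)) / (D ^ 2 - a * b) < n - D := by
      rw [div_lt_iff₀ hden2]
      have identity : (n - D) * (D ^ 2 - a * b) - n * (-(a * b))
          = D * (D * (n - D) - a * (-b)) := by ring
      have hpos : 0 < D * (D * (n - D) - a * (-b)) := mul_pos hDpos (by linarith [key2])
      linarith [identity, hpos]
    have step2 : n - D ≤ n * (m - D) / m := by
      rw [le_div_iff₀ hm0]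
      have identity : n * (m - D) - (n - D) * m = D * (m - n) := by ring
      have hpos : 0 ≤ D * (m - n) := mul_nonneg (le_of_lt hDpos) (by linarith)
      linarith [identity, hpos]
    exact step1.trans_le step2

theorem join_ratio_bounds_comparison :
    ∀ r₁ n₂ : ℕ, 1 ≤ r₁ → 1 ≤ n₂ → ∃ N : ℕ, ∀ n₁ : ℕ, N ≤ n₁ → ∀ r₂ : ℕ, r₂ ≤ n₂ - 1 →
    ∀ (G₁ : SimpleGraph (Fin n₁)) [DecidableRel G₁.Adj]
      (G₂ : SimpleGraph (Fin n₂)) [DecidableRel G₂.Adj],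
    G₁.IsRegularOfDegree r₁ → G₂.IsRegularOfDegree r₂ →
    ∀ δ : ℕ, IsLeast (Set.range fun v : Fin n₁ ⊕ Fin n₂ => (G₁.join G₂).degree v) δ →
    ∀ lmax lmin μ : ℝ,
      IsGreatest (spectrum ℝ ((G₁.join G₂).adjMatrix ℝ)) lmax →
      IsLeast (spectrum ℝ ((G₁.join G₂).adjMatrix ℝ)) lmin →
      IsGreatest (spectrum ℝ ((G₁.join G₂).lapMatrix ℝ)) μ →
      ∀ dbar : ℝ, dbar = (∑ v, ((G₁.join G₂).degree v : ℝ)) / ((n₁ : ℝ) + n₂) →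
      -lmin * ((n₁ : ℝ) + n₂) * (dbar - lmin) / ((δ : ℝ) - lmin) ^ 2 <
        ((n₁ : ℝ) + n₂) * (-(lmax * lmin)) / ((δ : ℝ) ^ 2 - lmax * lmin) ∧
      ((n₁ : ℝ) + n₂) * (-(lmax * lmin)) / ((δ : ℝ) ^ 2 - lmax * lmin) <
        ((n₁ : ℝ) + n₂) * (μ - (δ : ℝ)) / μ := by
  intro r₁ n₂ hr₁ hn₂
  refine ⟨16 * (r₁ + n₂) ^ 4, ?_⟩
  intro n₁ hn₁N r₂ hr₂nat G₁ _ G₂ _ h₁ h₂ δ hδ lmax lmin μ hlmax hlmin hμ dbar hdbar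
  -- basic nat facts
  have hpow : r₁ + n₂ ≤ (r₁ + n₂) ^ 4 := Nat.le_self_pow (by norm_num) _
  have hmul : 16 * (r₁ + n₂) ≤ 16 * (r₁ + n₂) ^ 4 := Nat.mul_le_mul_left _ hpow
  have hn₁gt : r₁ + n₂ < n₁ := by omega
  have hn₁1 : 1 ≤ n₁ := by omega
  have hr₂n₂ : r₂ + 1 ≤ n₂ := by omega
  -- δ = r₁ + n₂
  have hδval : δ = r₁ + n₂ := by
    obtain ⟨⟨w, hw⟩, hlb⟩ := hδ
    have hle : δ ≤ r₁ + n₂ := by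
      have h0 := hlb (Set.mem_range_self (Sum.inl (⟨0, hn₁1⟩ : Fin n₁)))
      rwa [join_degree_inl, h₁ _] at h0
    rcases w with a | b
    · change (G₁.join G₂).degree (Sum.inl a) = δ at hw
      rw [join_degree_inl, h₁ a] at hw
      omega
    · change (G₁.join G₂).degree (Sum.inr b) = δ at hw
      rw [join_degree_inr, h₂ b] at hw
      omega
  -- cast facts
  have hδR : (δ : ℝ) = (r₁ : ℝ) + n₂ := by rw [hδval]; push_cast; ring
  have hNR : 16 * ((r₁ : ℝ) + n₂) ^ 4 ≤ (n₁ : ℝ) := by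
    have : ((16 * (r₁ + n₂) ^ 4 : ℕ) : ℝ) ≤ (n₁ : ℝ) := Nat.cast_le.mpr hn₁N
    push_cast at this
    linarith
  have hR1 : (1 : ℝ) ≤ (r₁ : ℝ) := by exact_mod_cast hr₁
  have hN2 : (1 : ℝ) ≤ (n₂ : ℝ) := by exact_mod_cast hn₂
  have hR2 : (0 : ℝ) ≤ (r₂ : ℝ) := Nat.cast_nonneg _
  have hR2' : (r₂ : ℝ) + 1 ≤ (n₂ : ℝ) := by exact_mod_cast hr₂n₂
  -- s₀
  have hs₀0 : 0 ≤ Real.sqrt ((n₁ : ℝ) * n₂) := Real.sqrt_nonneg _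
  have hs₀sq : Real.sqrt ((n₁ : ℝ) * n₂) ^ 2 = (n₁ : ℝ) * n₂ := Real.sq_sqrt (by positivity)
  set s₀ : ℝ := Real.sqrt ((n₁ : ℝ) * n₂) with hs₀def
  -- eigenvalue location via explicit roots
  set E : ℝ := Real.sqrt (((r₁ : ℝ) - r₂) ^ 2 + 4 * ((n₁ : ℝ) * n₂)) with hEdef
  have hE0 : 0 ≤ E := Real.sqrt_nonneg _
  have hE2 : E ^ 2 = ((r₁ : ℝ) - r₂) ^ 2 + 4 * ((n₁ : ℝ) * n₂) := Real.sq_sqrt (by positivity)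
  have hE2s : 2 * s₀ ≤ E := by
    have h1 : (2 * s₀) ^ 2 ≤ E ^ 2 := by
      rw [hE2]
      nlinarith [hs₀sq, sq_nonneg ((r₁ : ℝ) - r₂)]
    have := abs_le_of_sq_le_sq h1 hE0
    rwa [abs_of_nonneg (by positivity)] at this
  have hxp_root : ((((r₁ : ℝ) + r₂ + E) / 2) - r₁) * ((((r₁ : ℝ) + r₂ + E) / 2) - r₂)
      = (n₁ : ℝ) * n₂ := by linear_combination hE2 / 4
  have hxm_root : ((((r₁ : ℝ) + r₂ - E) / 2) - r₁) * ((((r₁ : ℝ) + r₂ - E) / 2) - r₂)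
      = (n₁ : ℝ) * n₂ := by linear_combination hE2 / 4
  have ha1 : ((r₁ : ℝ) + r₂ + E) / 2 ≤ lmax :=
    hlmax.2 (join_root_mem_spectrum G₁ G₂ hn₁1 hn₂ h₁ h₂ hxp_root)
  have hb1 : lmin ≤ ((r₁ : ℝ) + r₂ - E) / 2 :=
    hlmin.2 (join_root_mem_spectrum G₁ G₂ hn₁1 hn₂ h₁ h₂ hxm_root)
  have ha : s₀ ≤ lmax := by linarith [ha1, hE2s, hR1, hR2]
  have hb : lmin ≤ ((r₁ : ℝ) + n₂) - s₀ := by linarith [hb1, hE2s, hR2', hR1, hN2]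
  -- absolute bounds
  have habs_max := join_spec_abs_bound G₁ G₂ hn₂ h₁ h₂ (by omega) hlmax.1
  have habs_min := join_spec_abs_bound G₁ G₂ hn₂ h₁ h₂ (by omega) hlmin.1
  rw [abs_le] at habs_max habs_min
  have haK : lmax ≤ s₀ + ((r₁ : ℝ) + n₂) := by
    have := habs_max.2; rw [← hs₀def] at this; linarith
  have hbK : -(s₀ + ((r₁ : ℝ) + n₂)) ≤ lmin := by
    have := habs_min.1; rw [← hs₀def] at this; linarith
  -- Laplacian
  have hμn : (n₁ : ℝ) + n₂ ≤ μ := hμ.2 (join_lap_mem_spectrum G₁ G₂ hn₁1 hn₂ h₁ h₂)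
  -- dbar
  have hnpos : (0 : ℝ) < (n₁ : ℝ) + n₂ := by positivity
  have hdsum : (∑ v, ((G₁.join G₂).degree v : ℝ))
      = (n₁ : ℝ) * ((r₁ : ℝ) + n₂) + (n₂ : ℝ) * ((n₁ : ℝ) + r₂) := by
    rw [Fintype.sum_sum_type]
    have e1 : ∀ a : Fin n₁, (((G₁.join G₂).degree (Sum.inl a) : ℕ) : ℝ) = (r₁ : ℝ) + n₂ := by
      intro a; rw [join_degree_inl, h₁ a]; push_cast; ring
    have e2 : ∀ b : Fin n₂, (((G₁.join G₂).degree (Sum.inr b) : ℕ) : ℝ) = (n₁ : ℝ) + r₂ := by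
      intro b; rw [join_degree_inr, h₂ b]; push_cast; ring
    rw [Finset.sum_congr rfl fun a _ => e1 a, Finset.sum_congr rfl fun b _ => e2 b,
      Finset.sum_const, Finset.sum_const, Finset.card_univ, Finset.card_univ,
      Fintype.card_fin, Fintype.card_fin, nsmul_eq_mul, nsmul_eq_mul]
  have hdn : dbar * ((n₁ : ℝ) + n₂)
      = (n₁ : ℝ) * ((r₁ : ℝ) + n₂) + (n₂ : ℝ) * ((n₁ : ℝ) + r₂) := by
    rw [hdbar, div_mul_cancel₀ _ (ne_of_gt hnpos), hdsum]
  -- conclude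
  rw [hδR]
  exact final_numeric (r₁ : ℝ) (r₂ : ℝ) (n₁ : ℝ) (n₂ : ℝ) ((n₁ : ℝ) + n₂) ((r₁ : ℝ) + n₂)
    dbar lmax lmin μ s₀ hR1 hN2 hR2 hR2' hNR rfl rfl hs₀0 hs₀sq ha haK hb hbK hμn hdn
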